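/- arXiv:1605.03127 — 3 statements merged into one kernel-verified Lean document; each statement's English description precedes it below -/
import Mathlib

section
/- Let X be a paracompact Hausdorff topological space and Y be a Hausdorff topological vector space. Let T : X → 2^Y be a correspondence with nonempty convex values such that for each y ∈ Y the lower section T⁻¹(y) = {x ∈ X : y ∈ T(x)} is open in X. Then T has a continuous selection, i.e., there exists a continuous function f : X → Y such that f(x) ∈ T(x) for each x ∈ X. -/
/-- **Yannelis–Prabhakar continuous selection lemma.**
Let `X` be a paracompact Hausdorff topological space and `Y` a Hausdorff topological
vector space. If `T : X → 2^Y` has nonempty convex values and open lower sections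
`T⁻¹(y) = {x : y ∈ T x}`, then `T` admits a continuous selection. -/
theorem yannelis_prabhakar_continuous_selection
    {X Y : Type*} [TopologicalSpace X] [ParacompactSpace X] [T2Space X]
    [AddCommGroup Y] [Module ℝ Y] [TopologicalSpace Y]
    [IsTopologicalAddGroup Y] [ContinuousSMul ℝ Y] [T2Space Y]
    (T : X → Set Y)
    (hTne : ∀ x, (T x).Nonempty)
    (hTconv : ∀ x, Convex ℝ (T x))
    (hTopen : ∀ y : Y, IsOpen {x : X | y ∈ T x}) :
    ∃ f : X → Y, Continuous f ∧ ∀ x, f x ∈ T x := by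
  obtain ⟨g, hg⟩ := exists_continuous_forall_mem_convex_of_local_const hTconv
    (fun x => by
      obtain ⟨y, hy⟩ := hTne x
      exact ⟨y, (hTopen y).mem_nhds hy⟩)
  exact ⟨g, g.continuous, hg⟩
end

section
/- Let X be a nonempty, convex and compact set in a Hausdorff locally convex topological vector space E, let C ⊆ E be a nonempty closed convex cone, let A : X → 2^X be a correspondence, and let F : X × X × X → 2^E be a correspondence with nonempty values such that for each y ∈ X the correspondence (u,z) ↦ F(u,y,z) is lower (−C)-semicontinuous. Then for each fixed y ∈ X, the set { x ∈ X : there exist u, z ∈ Ā(x) such that F(u,y,z) ⊆ C } is closed in X; equivalently, the set { x ∈ X : Ā(x) ∩ { u ∈ X : ∃ z ∈ Ā(x), F(u,y,z) ⊆ C } = ∅ } is open in X. -/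
open Pointwise in
/-- A correspondence `T : K → 2^Y` is lower `(−C)`-semicontinuous if at every `x₀ ∈ K`,
for any neighborhood `U` of the origin in `Y` there is a neighborhood `V` of `x₀` in `K`
such that for all `x ∈ V`, `T(x₀) ⊆ T(x) + U + C`. -/
def LowerNegCSemicontinuousOn {α Y : Type*} [TopologicalSpace α] [AddCommGroup Y]
    [TopologicalSpace Y] (K : Set α) (C : Set Y) (T : α → Set Y) : Prop :=
  ∀ x₀ ∈ K, ∀ U ∈ nhds (0 : Y), ∃ V ∈ nhdsWithin x₀ K, ∀ x ∈ V, T x₀ ⊆ T x + U + C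

/-- The graph of the correspondence `A : X → 2^X`, i.e. `Gr A = {(x,y) ∈ X × X : y ∈ A(x)}`. -/
def corrGraph {E : Type*} (X : Set E) (A : E → Set E) : Set (E × E) :=
  (X ×ˢ X) ∩ {p : E × E | p.2 ∈ A p.1}

/-- The correspondence `Ā`, defined by `Ā(x) = {y ∈ X : (x,y) ∈ cl_{X×X} Gr A}`. -/
def corrBar {E : Type*} [TopologicalSpace E] (X : Set E) (A : E → Set E) (x : E) : Set E :=
  {y ∈ X | (x, y) ∈ closure (corrGraph X A) ∩ X ×ˢ X}

open Pointwise Filter Topology Set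

/-- Let `X` be a nonempty convex compact set in a Hausdorff locally convex space `E`,
`C ⊆ E` a nonempty closed convex cone, `A : X → 2^X` a correspondence, and
`F : X × X × X → 2^E` a correspondence with nonempty values such that for each `y ∈ X`,
`(u,z) ↦ F(u,y,z)` is lower `(−C)`-semicontinuous.  Then for each fixed `y ∈ X` the set
`{x ∈ X : ∃ u, z ∈ Ā(x), F(u,y,z) ⊆ C}` is closed in `X`; equivalently, the set
`{x ∈ X : Ā(x) ∩ {u : ∃ z ∈ Ā(x), F(u,y,z) ⊆ C} = ∅}` is open in `X`. -/
theorem isClosed_exists_subset_cone_section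
    {E : Type*} [AddCommGroup E] [Module ℝ E] [TopologicalSpace E]
    [IsTopologicalAddGroup E] [ContinuousSMul ℝ E] [T2Space E] [LocallyConvexSpace ℝ E]
    {X : Set E} (hXne : X.Nonempty) (hXconv : Convex ℝ X) (hXcomp : IsCompact X)
    {C : Set E} (hCne : C.Nonempty) (hCclosed : IsClosed C) (hCconv : Convex ℝ C)
    (hCcone : ∀ r : ℝ, 0 < r → ∀ c ∈ C, r • c ∈ C)
    (A : E → Set E) (hAsub : ∀ x ∈ X, A x ⊆ X)
    (F : E → E → E → Set E)
    (hFne : ∀ u ∈ X, ∀ y ∈ X, ∀ z ∈ X, (F u y z).Nonempty)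
    (hFlsc : ∀ y ∈ X, LowerNegCSemicontinuousOn (X ×ˢ X) C (fun p : E × E => F p.1 y p.2))
    (y : E) (hy : y ∈ X) :
    IsClosed {x : X | ∃ u ∈ corrBar X A (x : E), ∃ z ∈ corrBar X A (x : E), F u y z ⊆ C} ∧
    IsOpen {x : X |
      corrBar X A (x : E) ∩ {u : E | ∃ z ∈ corrBar X A (x : E), F u y z ⊆ C} = ∅} := by
  classical
  -- C + C ⊆ C
  have hCC : ∀ c1 ∈ C, ∀ c2 ∈ C, c1 + c2 ∈ C := by
    intro c1 h1 c2 h2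
    have hm : (1/2 : ℝ) • c1 + (1/2 : ℝ) • c2 ∈ C :=
      hCconv h1 h2 (by norm_num) (by norm_num) (by norm_num)
    have h2m := hCcone 2 (by norm_num) _ hm
    have : (2:ℝ) • ((1/2 : ℝ) • c1 + (1/2 : ℝ) • c2) = c1 + c2 := by
      rw [smul_add, smul_smul, smul_smul]; norm_num
    rwa [this] at h2m
  have key : IsClosed {x : X | ∃ u ∈ corrBar X A (x : E), ∃ z ∈ corrBar X A (x : E),
      F u y z ⊆ C} := by
    rw [isClosed_iff_clusterPt]
    intro x hx
    set S := {x : X | ∃ u ∈ corrBar X A (x : E), ∃ z ∈ corrBar X A (x : E), F u y z ⊆ C}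
      with hSdef
    have hsel : ∀ s : X, s ∈ S → ∃ u ∈ corrBar X A (s : E), ∃ z ∈ corrBar X A (s : E),
        F u y z ⊆ C := fun s hs => hs
    choose! u hu z hz hFC using hsel
    haveI : (𝓝 x ⊓ 𝓟 S).NeBot := hx
    set G := Ultrafilter.of (𝓝 x ⊓ 𝓟 S) with hGdef
    have hGle : (G : Filter X) ≤ 𝓝 x ⊓ 𝓟 S := Ultrafilter.of_le _
    have hGS : ∀ᶠ s in (G : Filter X), s ∈ S :=
      le_principal_iff.mp (hGle.trans inf_le_right)
    have hΦmem : ∀ᶠ s in (G : Filter X), (u s, z s) ∈ X ×ˢ X :=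
      hGS.mono fun s hs => ⟨(hu s hs).1, (hz s hs).1⟩
    obtain ⟨⟨u₀, z₀⟩, hwX, hwlim⟩ :=
      (hXcomp.prod hXcomp).ultrafilter_le_nhds (G.map fun s => (u s, z s))
        (le_principal_iff.mpr (mem_map.mpr hΦmem))
    have hwlim' : Tendsto (fun s : X => (u s, z s)) (G : Filter X) (𝓝 (u₀, z₀)) := hwlim
    have hxval : Tendsto (fun s : X => (s : E)) (G : Filter X) (𝓝 (x : E)) :=
      (continuous_subtype_val.tendsto x).mono_left (hGle.trans inf_le_left)
    have hulim : Tendsto (fun s : X => u s) (G : Filter X) (𝓝 u₀) :=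
      (continuous_fst.tendsto (u₀, z₀)).comp hwlim'
    have hzlim : Tendsto (fun s : X => z s) (G : Filter X) (𝓝 z₀) :=
      (continuous_snd.tendsto (u₀, z₀)).comp hwlim'
    have huclos : ((x : E), u₀) ∈ closure (corrGraph X A) :=
      isClosed_closure.mem_of_tendsto (hxval.prodMk_nhds hulim)
        (hGS.mono fun s hs => (hu s hs).2.1)
    have hzclos : ((x : E), z₀) ∈ closure (corrGraph X A) :=
      isClosed_closure.mem_of_tendsto (hxval.prodMk_nhds hzlim)
        (hGS.mono fun s hs => (hz s hs).2.1)
    have hu₀ : u₀ ∈ corrBar X A (x : E) :=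
      ⟨hwX.1, huclos, Set.mem_prod.mpr ⟨x.2, hwX.1⟩⟩
    have hz₀ : z₀ ∈ corrBar X A (x : E) :=
      ⟨hwX.2, hzclos, Set.mem_prod.mpr ⟨x.2, hwX.2⟩⟩
    refine ⟨u₀, hu₀, z₀, hz₀, fun v hv => ?_⟩
    have hvC : v ∈ closure C := by
      rw [mem_closure_iff_nhds]
      intro N hN
      have hUnhds : {w : E | v - w ∈ N} ∈ 𝓝 (0 : E) := by
        have hc : Continuous fun w : E => v - w := continuous_const.sub continuous_id
        have := hc.continuousAt (x := (0 : E)) (by simpa using hN)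
        exact this
      obtain ⟨V, hV, hVsub⟩ :=
        hFlsc y hy (u₀, z₀) (Set.mem_prod.mpr ⟨hwX.1, hwX.2⟩) _ hUnhds
      have htV : Tendsto (fun s : X => (u s, z s)) (G : Filter X) (𝓝[X ×ˢ X] (u₀, z₀)) :=
        tendsto_inf.mpr ⟨hwlim', le_principal_iff.mpr (mem_map.mpr hΦmem)⟩
      have hnhV : ∀ᶠ s in (G : Filter X), (u s, z s) ∈ V := htV hV
      obtain ⟨s, hsS, hsV⟩ := (hGS.and hnhV).exists
      have hsub := hVsub (u s, z s) hsV
      obtain ⟨w1, hw1, c2, hc2, hvq⟩ := hsub hv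
      obtain ⟨f, hf, w', hw', hw1eq⟩ := hw1
      have hfC : f ∈ C := hFC s hsS hf
      have hw'N : v - w' ∈ N := hw'
      have heq : v - w' = f + c2 := by
        rw [← hvq, ← hw1eq]; beta_reduce; abel
      exact ⟨v - w', hw'N, heq ▸ hCC f hfC c2 hc2⟩
    rwa [hCclosed.closure_eq] at hvC
  refine ⟨key, ?_⟩
  have hcompl : {x : X |
      corrBar X A (x : E) ∩ {u : E | ∃ z ∈ corrBar X A (x : E), F u y z ⊆ C} = ∅} =
      {x : X | ∃ u ∈ corrBar X A (x : E), ∃ z ∈ corrBar X A (x : E), F u y z ⊆ C}ᶜ := by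
    ext x
    simp only [Set.mem_setOf_eq, Set.mem_compl_iff, Set.eq_empty_iff_forall_notMem,
      Set.mem_inter_iff, not_exists, not_and]
  rw [hcompl]
  exact key.isOpen_compl
end

section
/- Let X be a nonempty, convex and compact set in a Hausdorff locally convex topological vector space E, let C ⊆ E be a nonempty closed convex cone with nonempty interior, let A : X → 2^X be a correspondence such that Ā is lower semicontinuous, and let F : X × X × X → 2^E be an upper semicontinuous correspondence with nonempty closed values. Then the set U = { (x,y) ∈ X × X : for every u ∈ Ā(x) and every z ∈ Ā(x), F(u,y,z) ⊄ int C } is closed in X × X. -/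
/-- A correspondence `T : K → 2^Y` is upper semicontinuous if for each `x ∈ K` and each
open `V ⊆ Y` with `T(x) ⊆ V` there is a neighborhood `W` of `x` in `K` on which
`T(y) ⊆ V`. -/
def UpperSemicontinuousCorrOn {α Y : Type*} [TopologicalSpace α] [TopologicalSpace Y]
    (K : Set α) (T : α → Set Y) : Prop :=
  ∀ x ∈ K, ∀ V : Set Y, IsOpen V → T x ⊆ V → ∃ W ∈ nhdsWithin x K, ∀ y ∈ W, T y ⊆ V

/-- A correspondence `T : K → 2^Y` is lower semicontinuous if for each `x ∈ K` and each
open `V ⊆ Y` with `T(x) ∩ V ≠ ∅` there is a neighborhood `W` of `x` in `K` on which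
`T(y) ∩ V ≠ ∅`. -/
def LowerSemicontinuousCorrOn {α Y : Type*} [TopologicalSpace α] [TopologicalSpace Y]
    (K : Set α) (T : α → Set Y) : Prop :=
  ∀ x ∈ K, ∀ V : Set Y, IsOpen V → (T x ∩ V).Nonempty →
    ∃ W ∈ nhdsWithin x K, ∀ y ∈ W, (T y ∩ V).Nonempty

/-- Let `X` be a nonempty convex compact set in a Hausdorff locally convex space `E`,
`C ⊆ E` a nonempty closed convex cone with nonempty interior, `A : X → 2^X` a
correspondence with `Ā` lower semicontinuous, and `F : X × X × X → 2^E` upper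
semicontinuous with nonempty closed values.  Then the set
`U = {(x,y) ∈ X × X : ∀ u ∈ Ā(x), ∀ z ∈ Ā(x), F(u,y,z) ⊄ int C}` is closed in `X × X`. -/
theorem isClosed_GSVQEP_set
    {E : Type*} [AddCommGroup E] [Module ℝ E] [TopologicalSpace E]
    [IsTopologicalAddGroup E] [ContinuousSMul ℝ E] [T2Space E] [LocallyConvexSpace ℝ E]
    {X : Set E} (hXne : X.Nonempty) (hXconv : Convex ℝ X) (hXcomp : IsCompact X)
    {C : Set E} (hCne : C.Nonempty) (hCclosed : IsClosed C) (hCconv : Convex ℝ C)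
    (hCcone : ∀ r : ℝ, 0 < r → ∀ c ∈ C, r • c ∈ C) (hCint : (interior C).Nonempty)
    (A : E → Set E) (hAsub : ∀ x ∈ X, A x ⊆ X)
    (hAbarLsc : LowerSemicontinuousCorrOn X (corrBar X A))
    (F : E → E → E → Set E)
    (hFusc : UpperSemicontinuousCorrOn (X ×ˢ (X ×ˢ X))
      (fun p : E × E × E => F p.1 p.2.1 p.2.2))
    (hFne : ∀ u ∈ X, ∀ y ∈ X, ∀ z ∈ X, (F u y z).Nonempty)
    (hFcl : ∀ u ∈ X, ∀ y ∈ X, ∀ z ∈ X, IsClosed (F u y z)) :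
    IsClosed {p ∈ X ×ˢ X |
      ∀ u ∈ corrBar X A p.1, ∀ z ∈ corrBar X A p.1, ¬ F u p.2 z ⊆ interior C} := by
  set S := {p ∈ X ×ˢ X |
      ∀ u ∈ corrBar X A p.1, ∀ z ∈ corrBar X A p.1, ¬ F u p.2 z ⊆ interior C} with hS
  apply isClosed_of_closure_subset
  intro p hp
  have hXXcl : IsClosed (X ×ˢ X) := (hXcomp.prod hXcomp).isClosed
  have hpX : p ∈ X ×ˢ X := by
    have h1 : closure S ⊆ closure (X ×ˢ X) := closure_mono (Set.sep_subset _ _)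
    rw [hXXcl.closure_eq] at h1
    exact h1 hp
  refine ⟨hpX, ?_⟩
  by_contra h
  push_neg at h
  obtain ⟨u, hu, z, hz, hF⟩ := h
  -- apply upper semicontinuity of F at (u, p.2, z)
  obtain ⟨W, hW, hWsub⟩ := hFusc (u, p.2, z) ⟨hu.1, hpX.2, hz.1⟩ (interior C)
    isOpen_interior hF
  rw [mem_nhdsWithin] at hW
  obtain ⟨O, hOopen, hOmem, hOsub⟩ := hW
  have hOnhds : O ∈ nhds (u, (p.2, z)) := hOopen.mem_nhds hOmem
  rw [mem_nhds_prod_iff] at hOnhds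
  obtain ⟨O1, hO1, V, hV, hO1V⟩ := hOnhds
  rw [mem_nhds_prod_iff] at hV
  obtain ⟨O2, hO2, O3, hO3, hO23⟩ := hV
  -- lower semicontinuity of Ā at p.1 with interior O1 and interior O3
  obtain ⟨W1, hW1, h1⟩ := hAbarLsc p.1 hpX.1 (interior O1) isOpen_interior
    ⟨u, hu, mem_interior_iff_mem_nhds.2 hO1⟩
  obtain ⟨W2, hW2, h2⟩ := hAbarLsc p.1 hpX.1 (interior O3) isOpen_interior
    ⟨z, hz, mem_interior_iff_mem_nhds.2 hO3⟩
  have hW12 : W1 ∩ W2 ∈ nhdsWithin p.1 X := Filter.inter_mem hW1 hW2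
  rw [mem_nhdsWithin] at hW12
  obtain ⟨N, hNopen, hNx, hNsub⟩ := hW12
  -- use p ∈ closure S with the open neighborhood N ×ˢ interior O2
  have hopen : IsOpen (N ×ˢ interior O2) := hNopen.prod isOpen_interior
  have hpmem : p ∈ N ×ˢ interior O2 := ⟨hNx, mem_interior_iff_mem_nhds.2 hO2⟩
  obtain ⟨q, hqNO, hqS⟩ := mem_closure_iff.1 hp _ hopen hpmem
  obtain ⟨hqXX, hqall⟩ := hqS
  have hq1 : q.1 ∈ W1 ∩ W2 := hNsub ⟨hqNO.1, hqXX.1⟩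
  obtain ⟨u', hu', hu'O⟩ := h1 q.1 hq1.1
  obtain ⟨z', hz', hz'O⟩ := h2 q.1 hq1.2
  have hmem : (u', (q.2, z')) ∈ O ∩ (X ×ˢ (X ×ˢ X)) := by
    refine ⟨?_, hu'.1, hqXX.2, hz'.1⟩
    exact hO1V ⟨interior_subset hu'O, hO23 ⟨interior_subset hqNO.2, interior_subset hz'O⟩⟩
  exact hqall u' hu' z' hz' (hWsub _ (hOsub hmem))
end
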